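/- Let S be a poset and (G_i), (H_i) families of terminating games indexed by S whose ordered joins are terminating. If Γ₁(G_i) = Γ₁(H_i) for every i ∈ S, then Γ₁(S ⋈ G) = Γ₁(S ⋈ H), i.e., the Grundy set of an ordered join is determined by its shape and the Grundy sets of its components. -/

import Mathlib

universe u

/-- Combinatorial games were removed from Mathlib; the December 2024 definitions are restated. -/
inductive SetTheory.PGame : Type (u + 1)
  | mk : ∀ α β : Type u, (α → SetTheory.PGame) → (β → SetTheory.PGame) → SetTheory.PGame

/-- Nimbers: a type synonym for the ordinals, as in Mathlib of December 2024. -/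
def Nimber : Type (u + 1) := Ordinal.{u}

noncomputable section

instance Nimber.instCCLOB : ConditionallyCompleteLinearOrderBot Nimber.{u} :=
  inferInstanceAs (ConditionallyCompleteLinearOrderBot Ordinal.{u})

namespace SetTheory
namespace PGame

def LeftMoves : PGame.{u} → Type u
  | mk l _ _ _ => l

def RightMoves : PGame.{u} → Type u
  | mk _ r _ _ => r

def moveLeft : ∀ g : PGame.{u}, LeftMoves g → PGame.{u}
  | mk _ _ L _ => L

def moveRight : ∀ g : PGame.{u}, RightMoves g → PGame.{u}
  | mk _ _ _ R => R

instance : Zero PGame.{u} := ⟨⟨PEmpty, PEmpty, PEmpty.elim, PEmpty.elim⟩⟩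

/-- The pair `(x ≤ y, x ⧏ y)`, defined by simultaneous recursion. -/
def leLf (x : PGame.{u}) : PGame.{u} → Prop × Prop :=
  PGame.rec (motive := fun _ => PGame.{u} → Prop × Prop)
    (fun _ _ _ _ ihL ihR => fun y =>
      PGame.rec (motive := fun _ => Prop × Prop)
        (fun yl yr yL yR jhL jhR =>
          ((∀ i, (ihL i (mk yl yr yL yR)).2) ∧ ∀ j, (jhR j).2,
           (∃ j, (jhL j).1) ∨ ∃ i, (ihR i (mk yl yr yL yR)).1)) y) x

def le (x y : PGame.{u}) : Prop := (leLf x y).1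

def equiv (x y : PGame.{u}) : Prop := le x y ∧ le y x

def neg : PGame.{u} → PGame.{u}
  | mk l r L R => mk r l (fun i => neg (R i)) (fun i => neg (L i))

def ImpartialAux : PGame.{u} → Prop
  | mk l r L R => equiv (mk l r L R) (neg (mk l r L R)) ∧ (∀ i, ImpartialAux (L i)) ∧
      ∀ j, ImpartialAux (R j)

class Impartial (G : PGame.{u}) : Prop where
  out : ImpartialAux G

def grundyValue : PGame.{u} → Nimber.{u}
  | mk _ _ L _ => sInf (Set.range fun i => grundyValue (L i))ᶜ

end PGame
end SetTheory

end

open SetTheory PGame Nimber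

noncomputable section
open Classical in
/-- The state resulting from a (Left) move in component `i₀` of an ordered join:
all components strictly above `i₀` are replaced by the empty game `0`. -/
def ojNextL {S : Type} [PartialOrder S] (x : S → PGame) (i₀ : S) (j : (x i₀).LeftMoves) :
    S → PGame :=
  fun i => if i = i₀ then (x i₀).moveLeft j else if i₀ < i then 0 else x i

open Classical in
def ojNextR {S : Type} [PartialOrder S] (x : S → PGame) (i₀ : S) (j : (x i₀).RightMoves) :
    S → PGame :=
  fun i => if i = i₀ then (x i₀).moveRight j else if i₀ < i then 0 else x i

/-- The move relation of the ordered join: `OJRel y x` iff `y` results from `x` by a single move. -/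
def OJRel {S : Type} [PartialOrder S] (y x : S → PGame) : Prop :=
  (∃ i₀ j, y = ojNextL x i₀ j) ∨ (∃ i₀ j, y = ojNextR x i₀ j)

theorem ojrel_L {S : Type} [PartialOrder S] (x : S → PGame) (i₀ : S) (j : (x i₀).LeftMoves) :
    OJRel (ojNextL x i₀ j) x := Or.inl ⟨i₀, j, rfl⟩

theorem ojrel_R {S : Type} [PartialOrder S] (x : S → PGame) (i₀ : S) (j : (x i₀).RightMoves) :
    OJRel (ojNextR x i₀ j) x := Or.inr ⟨i₀, j, rfl⟩

/-- The ordered join of a family of games, as a game, given a termination certificate. -/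
def ojoinAcc {S : Type} [PartialOrder S] : ∀ x : S → PGame, Acc OJRel x → PGame := fun x h =>
  Acc.rec (motive := fun x _ => PGame)
    (fun x _ ih =>
      PGame.mk (Σ i₀ : S, (x i₀).LeftMoves) (Σ i₀ : S, (x i₀).RightMoves)
        (fun p => ih _ (ojrel_L x p.1 p.2))
        (fun p => ih _ (ojrel_R x p.1 p.2))) h

open Classical in
/-- The ordered join `S ⋈ G` of a family of games `G` over the poset `S`.
(Defined as `0` in the degenerate non-terminating case.) -/
def ojoin {S : Type} [PartialOrder S] (x : S → PGame) : PGame :=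
  if h : Acc OJRel x then ojoinAcc x h else 0

/-- The Grundy set `Γ₁(G)`: the set of Grundy numbers of the options of `G`. -/
def grundySet (G : PGame) : Set Nimber :=
  Set.range fun i => grundyValue (G.moveLeft i)
end

section Aux
/-! ### Generic facts about `grundySet` -/

theorem grundyValue_eq_sInf (G : PGame) :
    grundyValue G = sInf (Set.range fun i => grundyValue (G.moveLeft i))ᶜ := by
  cases G
  rw [grundyValue] <;> rfl

instance nimber_wellFoundedLT : WellFoundedLT Nimber.{u} :=
  inferInstanceAs (WellFoundedLT Ordinal.{u})

theorem grundyValue_ne_moveLeft {G : PGame} (i : G.LeftMoves) :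
    grundyValue (G.moveLeft i) ≠ grundyValue G := by
  intro h
  have hm : grundyValue G ∈ (Set.range fun i => grundyValue (G.moveLeft i))ᶜ := by
    rw [grundyValue_eq_sInf]
    exact csInf_mem
      (Ordinal.nonempty_compl_range.{_, 0} fun i : G.LeftMoves => grundyValue (G.moveLeft i))
  exact hm ⟨i, h⟩

theorem exists_grundyValue_moveLeft_of_lt {G : PGame} {v : Nimber} (h : v < grundyValue G) :
    ∃ i, grundyValue (G.moveLeft i) = v := by
  rw [grundyValue_eq_sInf] at h
  have := notMem_of_lt_csInf h (OrderBot.bddBelow _)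
  simpa using this

instance isEmpty_leftMoves_zero : IsEmpty (LeftMoves (0 : PGame)) :=
  inferInstanceAs (IsEmpty PEmpty)

theorem grundyValue_zero : grundyValue (0 : PGame) = ⊥ := by
  rw [grundyValue_eq_sInf]
  have : (Set.range fun i => grundyValue ((0 : PGame).moveLeft i)) = ∅ :=
    Set.range_eq_empty _
  rw [this, Set.compl_empty]
  exact csInf_univ

theorem mem_grundySet {G : PGame} {v : Nimber} :
    v ∈ grundySet G ↔ ∃ i, grundyValue (G.moveLeft i) = v := Set.mem_range

theorem grundyValue_notMem_grundySet (G : PGame) : grundyValue G ∉ grundySet G := by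
  rintro ⟨i, hi⟩; exact grundyValue_ne_moveLeft i hi

theorem mem_grundySet_of_lt {G : PGame} {v : Nimber} (h : v < grundyValue G) :
    v ∈ grundySet G := by
  obtain ⟨i, hi⟩ := exists_grundyValue_moveLeft_of_lt h
  exact ⟨i, hi⟩

theorem grundyValue_eq_of_grundySet_eq {G H : PGame} (h : grundySet G = grundySet H) :
    grundyValue G = grundyValue H := by
  by_contra hne
  rcases lt_or_gt_of_ne hne with hlt | hlt
  · exact grundyValue_notMem_grundySet G (h ▸ mem_grundySet_of_lt hlt)
  · exact grundyValue_notMem_grundySet H (h.symm ▸ mem_grundySet_of_lt hlt)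

theorem grundySet_zero : grundySet 0 = ∅ := by
  rw [grundySet]
  exact Set.range_eq_empty _

theorem grundyValue_of_grundySet_empty {G : PGame} (h : grundySet G = ∅) :
    grundyValue G = ⊥ := by
  rw [grundyValue_eq_sInf]
  rw [grundySet] at h
  rw [h, Set.compl_empty]
  exact csInf_univ

variable {S : Type} [PartialOrder S]

theorem ojNextL_self (x : S → PGame) (i₀ : S) (j : (x i₀).LeftMoves) :
    ojNextL x i₀ j i₀ = (x i₀).moveLeft j := if_pos rfl

theorem ojNextL_gt (x : S → PGame) (i₀ : S) (j : (x i₀).LeftMoves) {i : S} (h : i₀ < i) :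
    ojNextL x i₀ j i = 0 := by
  have hne : i ≠ i₀ := by rintro rfl; exact lt_irrefl _ h
  rw [ojNextL, if_neg hne, if_pos h]

theorem ojNextL_other (x : S → PGame) (i₀ : S) (j : (x i₀).LeftMoves) {i : S}
    (h : i ≠ i₀) (h' : ¬ i₀ < i) : ojNextL x i₀ j i = x i := by
  rw [ojNextL, if_neg h, if_neg h']

theorem ojoinAcc_eq (x : S → PGame) (h : Acc OJRel x) :
    ojoinAcc x h = PGame.mk (Σ i₀ : S, (x i₀).LeftMoves) (Σ i₀ : S, (x i₀).RightMoves)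
      (fun p => ojoinAcc _ (h.inv (ojrel_L x p.1 p.2)))
      (fun p => ojoinAcc _ (h.inv (ojrel_R x p.1 p.2))) := by
  cases h
  rfl

theorem ojoin_eq (x : S → PGame) (h : Acc OJRel x) :
    ojoin x = PGame.mk (Σ i₀ : S, (x i₀).LeftMoves) (Σ i₀ : S, (x i₀).RightMoves)
      (fun p => ojoin (ojNextL x p.1 p.2))
      (fun p => ojoin (ojNextR x p.1 p.2)) := by
  rw [ojoin, dif_pos h, ojoinAcc_eq]
  congr 1
  · funext p
    rw [ojoin, dif_pos (h.inv (ojrel_L x p.1 p.2))]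
  · funext p
    rw [ojoin, dif_pos (h.inv (ojrel_R x p.1 p.2))]

theorem grundySet_ojoin (x : S → PGame) (h : Acc OJRel x) :
    grundySet (ojoin x) =
      Set.range (fun p : Σ i₀ : S, (x i₀).LeftMoves =>
        grundyValue (ojoin (ojNextL x p.1 p.2))) := by
  rw [ojoin_eq x h]
  rfl

theorem moveLeft_cast {A B : PGame} (h : A = B) (j : B.LeftMoves) :
    A.moveLeft (cast (congrArg PGame.LeftMoves h).symm j) = B.moveLeft j := by
  subst h; rfl

/-- The invariant for the main induction: families `x`, `y` agree in Grundy sets off the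
"star set" `T`, agree in Grundy values on `T`, and everything strictly above a star
has empty Grundy set. -/
def OJInv (x y : S → PGame) (T : Set S) : Prop :=
  (∀ i ∉ T, grundySet (x i) = grundySet (y i)) ∧
  (∀ i ∈ T, grundyValue (x i) = grundyValue (y i)) ∧
  (∀ t ∈ T, ∀ i, t < i → grundySet (x i) = ∅ ∧ grundySet (y i) = ∅)

theorem OJInv.symm {x y : S → PGame} {T : Set S} (h : OJInv x y T) : OJInv y x T :=
  ⟨fun i hi => (h.1 i hi).symm, fun i hi => (h.2.1 i hi).symm,
   fun t ht i hti => ⟨(h.2.2 t ht i hti).2, (h.2.2 t ht i hti).1⟩⟩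

/-- One-sided claim: under the invariant, no move of `x` leads to a join with the same Grundy
value as `ojoin y`. -/
theorem side (x y : S → PGame) (hxa : Acc OJRel x) (hya : Acc OJRel y) (T : Set S)
    (hInv : OJInv x y T)
    (IH : ∀ x' y' (T' : Set S), Relation.TransGen OJRel x' x → (OJRel y' y ∨ y' = y) →
      OJInv x' y' T' → grundyValue (ojoin x') = grundyValue (ojoin y'))
    (i₀ : S) (j : (x i₀).LeftMoves) :
    grundyValue (ojoin (ojNextL x i₀ j)) ≠ grundyValue (ojoin y) := by
  obtain ⟨h1, h2, h3⟩ := hInv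
  set G' := (x i₀).moveLeft j with hG'
  set g' := grundyValue G' with hg'
  have hg'x : g' ∈ grundySet (x i₀) := ⟨j, rfl⟩
  set x' := ojNextL x i₀ j with hx'
  by_cases hmem : g' ∈ grundySet (y i₀)
  · -- Case A: match the move in `y`.
    obtain ⟨k, hk⟩ := hmem
    set y' := ojNextL y i₀ k with hy'
    have hInv' : OJInv x' y' (insert i₀ T) := by
      refine ⟨?_, ?_, ?_⟩
      · intro i hi
        have hne : i ≠ i₀ := fun e => hi (by rw [e]; exact Set.mem_insert i₀ T)
        by_cases hlt : i₀ < i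
        · rw [hx', hy', ojNextL_gt x i₀ j hlt, ojNextL_gt y i₀ k hlt]
        · rw [hx', hy', ojNextL_other x i₀ j hne hlt, ojNextL_other y i₀ k hne hlt]
          exact h1 i (fun h => hi (Set.mem_insert_of_mem _ h))
      · intro i hi
        rcases hi with rfl | hiT
        · rw [hx', hy', ojNextL_self, ojNextL_self]; exact hk.symm
        · by_cases hne : i = i₀
          · subst hne
            rw [hx', hy', ojNextL_self, ojNextL_self]; exact hk.symm
          · by_cases hlt : i₀ < i
            · rw [hx', hy', ojNextL_gt x i₀ j hlt, ojNextL_gt y i₀ k hlt]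
            · rw [hx', hy', ojNextL_other x i₀ j hne hlt, ojNextL_other y i₀ k hne hlt]
              exact h2 i hiT
      · intro t ht i hti
        rcases ht with rfl | htT
        · have hlt : t < i := hti
          rw [hx', hy', ojNextL_gt x t j hlt, ojNextL_gt y t k hlt]
          exact ⟨grundySet_zero, grundySet_zero⟩
        · by_cases hne : i = i₀
          · subst hne
            exact absurd ((h3 t htT i hti).1 ▸ hg'x) (by simp)
          · by_cases hlt : i₀ < i
            · rw [hx', hy', ojNextL_gt x i₀ j hlt, ojNextL_gt y i₀ k hlt]
              exact ⟨grundySet_zero, grundySet_zero⟩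
            · rw [hx', hy', ojNextL_other x i₀ j hne hlt, ojNextL_other y i₀ k hne hlt]
              exact h3 t htT i hti
    have heq := IH x' y' (insert i₀ T) (Relation.TransGen.single (ojrel_L x i₀ j))
      (Or.inl (ojrel_L y i₀ k)) hInv'
    rw [heq]
    intro hcontra
    exact grundyValue_notMem_grundySet (ojoin y)
      (by rw [grundySet_ojoin y hya]; exact ⟨⟨i₀, k⟩, hcontra⟩)
  · -- Case B: revert within the same component.
    have hT : i₀ ∈ T := by
      by_contra hT
      exact hmem (h1 i₀ hT ▸ hg'x)
    have hgt : grundyValue (y i₀) < g' := by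
      rcases lt_trichotomy g' (grundyValue (y i₀)) with hlt | heq | hlt
      · exact absurd (mem_grundySet_of_lt hlt) hmem
      · exact absurd hg'x (by rw [heq, ← h2 i₀ hT]; exact grundyValue_notMem_grundySet (x i₀))
      · exact hlt
    obtain ⟨j₂, hj₂⟩ := exists_grundyValue_moveLeft_of_lt (hg' ▸ hgt)
    have e : x' i₀ = G' := ojNextL_self x i₀ j
    set j₂' : (x' i₀).LeftMoves := cast (congrArg PGame.LeftMoves e).symm j₂ with hj₂'
    have hml : (x' i₀).moveLeft j₂' = G'.moveLeft j₂ := moveLeft_cast e j₂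
    set x'' := ojNextL x' i₀ j₂' with hx''
    have hx''self : x'' i₀ = G'.moveLeft j₂ := by rw [hx'', ojNextL_self, hml]
    have hx''gt : ∀ i, i₀ < i → x'' i = 0 := fun i hi => ojNextL_gt x' i₀ j₂' hi
    have hx''other : ∀ i, i ≠ i₀ → ¬ i₀ < i → x'' i = x i := by
      intro i hne hlt
      rw [hx'', ojNextL_other x' i₀ j₂' hne hlt, hx', ojNextL_other x i₀ j hne hlt]
    have hInv'' : OJInv x'' y T := by
      refine ⟨?_, ?_, ?_⟩
      · intro i hi
        have hne : i ≠ i₀ := fun e' => hi (e' ▸ hT)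
        by_cases hlt : i₀ < i
        · rw [hx''gt i hlt, grundySet_zero, (h3 i₀ hT i hlt).2]
        · rw [hx''other i hne hlt]; exact h1 i hi
      · intro i hi
        by_cases hne : i = i₀
        · subst hne
          rw [hx''self]; exact hj₂
        · by_cases hlt : i₀ < i
          · rw [hx''gt i hlt, grundyValue_zero,
              grundyValue_of_grundySet_empty (h3 i₀ hT i hlt).2]
          · rw [hx''other i hne hlt]; exact h2 i hi
      · intro t ht i hti
        refine ⟨?_, (h3 t ht i hti).2⟩
        by_cases hne : i = i₀
        · subst hne
          exact absurd ((h3 t ht i hti).1 ▸ hg'x) (by simp)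
        · by_cases hlt : i₀ < i
          · rw [hx''gt i hlt]; exact grundySet_zero
          · rw [hx''other i hne hlt]; exact (h3 t ht i hti).1
    have heq := IH x'' y T
      (Relation.TransGen.head (ojrel_L x' i₀ j₂') (Relation.TransGen.single (ojrel_L x i₀ j)))
      (Or.inr rfl) hInv''
    rw [← heq]
    intro hcontra
    have hxa' : Acc OJRel x' := hxa.inv (ojrel_L x i₀ j)
    exact grundyValue_notMem_grundySet (ojoin x')
      (by rw [grundySet_ojoin x' hxa']; exact ⟨⟨i₀, j₂'⟩, hcontra.symm⟩)

theorem key : ∀ x : S → PGame, Acc (Relation.TransGen OJRel) x →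
    ∀ y : S → PGame, Acc (Relation.TransGen OJRel) y →
    ∀ T : Set S, OJInv x y T → grundyValue (ojoin x) = grundyValue (ojoin y) := by
  intro x hx
  induction hx with
  | intro x hxacc IHx =>
    intro y hy
    induction hy with
    | intro y hyacc IHy =>
      intro T hInv
      have hxT : Acc (Relation.TransGen OJRel) x := Acc.intro x hxacc
      have hyT : Acc (Relation.TransGen OJRel) y := Acc.intro y hyacc
      have hxa : Acc OJRel x := Subrelation.accessible (fun h => Relation.TransGen.single h) hxT
      have hya : Acc OJRel y := Subrelation.accessible (fun h => Relation.TransGen.single h) hyT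
      -- x-side claim
      have sideX : ∀ (i₀ : S) (j : (x i₀).LeftMoves),
          grundyValue (ojoin (ojNextL x i₀ j)) ≠ grundyValue (ojoin y) := by
        intro i₀ j
        refine side x y hxa hya T hInv ?_ i₀ j
        intro x' y' T' hx' hy' hInv'
        refine IHx x' hx' y' ?_ T' hInv'
        rcases hy' with h | rfl
        · exact hyacc y' (Relation.TransGen.single h)
        · exact hyT
      have sideY : ∀ (i₀ : S) (k : (y i₀).LeftMoves),
          grundyValue (ojoin (ojNextL y i₀ k)) ≠ grundyValue (ojoin x) := by
        intro i₀ k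
        refine side y x hya hxa T hInv.symm ?_ i₀ k
        intro y' x' T' hy' hx' hInv'
        rcases hx' with h | rfl
        · exact (IHx x' (Relation.TransGen.single h) y' (hyacc y' hy') T' hInv'.symm).symm
        · exact (IHy y' hy' T' hInv'.symm).symm
      -- conclude by antisymmetry
      apply le_antisymm
      · apply le_of_not_gt
        intro hlt
        have := mem_grundySet_of_lt hlt
        rw [grundySet_ojoin x hxa] at this
        obtain ⟨⟨i₀, j⟩, hj⟩ := this
        exact sideX i₀ j hj
      · apply le_of_not_gt
        intro hlt
        have := mem_grundySet_of_lt hlt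
        rw [grundySet_ojoin y hya] at this
        obtain ⟨⟨i₀, k⟩, hk⟩ := this
        exact sideY i₀ k hk

end Aux

/-- general substitution: for terminating ordered joins in the same shape `S`,
if `Γ₁(G i) = Γ₁(H i)` for all `i ∈ S` then `Γ₁(S ⋈ G) = Γ₁(S ⋈ H)`. -/
theorem ojoin_general_substitution {S : Type} [PartialOrder S] (G H : S → PGame)
    (hGI : ∀ i, (G i).Impartial) (hHI : ∀ i, (H i).Impartial)
    (hG : Acc OJRel G) (hH : Acc OJRel H)
    (h1 : ∀ i, grundySet (G i) = grundySet (H i)) :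
    grundySet (ojoin G) = grundySet (ojoin H) := by
  have main : ∀ (x y : S → PGame), Acc OJRel x → Acc OJRel y →
      (∀ i, grundySet (x i) = grundySet (y i)) →
      ∀ v, v ∈ grundySet (ojoin x) → v ∈ grundySet (ojoin y) := by
    intro x y hx hy hxy v hv
    rw [grundySet_ojoin x hx] at hv
    obtain ⟨⟨i₀, j⟩, hj⟩ := hv
    have hg' : grundyValue ((x i₀).moveLeft j) ∈ grundySet (y i₀) := hxy i₀ ▸ ⟨j, rfl⟩
    obtain ⟨k, hk⟩ := hg'
    have hInv : OJInv (ojNextL x i₀ j) (ojNextL y i₀ k) {i₀} := by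
      refine ⟨?_, ?_, ?_⟩
      · intro i hi
        have hne : i ≠ i₀ := hi
        by_cases hlt : i₀ < i
        · rw [ojNextL_gt x i₀ j hlt, ojNextL_gt y i₀ k hlt]
        · rw [ojNextL_other x i₀ j hne hlt, ojNextL_other y i₀ k hne hlt]
          exact hxy i
      · intro i hi
        rcases hi with rfl
        rw [ojNextL_self, ojNextL_self]; exact hk.symm
      · intro t ht i hti
        rcases ht with rfl
        rw [ojNextL_gt x t j hti, ojNextL_gt y t k hti]
        exact ⟨grundySet_zero, grundySet_zero⟩
    have heq := key (ojNextL x i₀ j) ((hx.inv (ojrel_L x i₀ j)).transGen)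
      (ojNextL y i₀ k) ((hy.inv (ojrel_L y i₀ k)).transGen) {i₀} hInv
    rw [grundySet_ojoin y hy]
    refine ⟨⟨i₀, k⟩, ?_⟩
    show grundyValue (ojoin (ojNextL y i₀ k)) = v
    rw [← heq]
    exact hj
  ext v
  exact ⟨main G H hG hH h1 v, main H G hH hG (fun i => (h1 i).symm) v⟩
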